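/- arXiv:1710.02713 — 4 statements merged into one kernel-verified Lean document; each statement's English description precedes it below -/
import Mathlib

section
/- Let ⟨κₙ : n < ω⟩ be an increasing sequence of regular cardinals with ⟨κₙ⟩ ∈ M, where M is the limit of an IA chain of regular uncountable length δ and |M| < κ₀. Then every function in ∏ₙ(M ∩ κₙ) is pointwise dominated by a function in M ∩ ∏ₙ κₙ; hence M is tight for ⟨κₙ⟩. -/
open FirstOrder

/-- The relation symbols of the language of set theory: a single binary relation. -/
inductive memRel : ℕ → Type
  | mem : memRel 2

/-- The language of set theory, with a single binary relation `∈`. -/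
def memLang : FirstOrder.Language := ⟨fun _ => Empty, memRel⟩

/-- `ZFSet` as a structure in the language of set theory. -/
noncomputable instance : memLang.Structure ZFSet where
  funMap := fun e _ => e.elim
  RelMap | .mem => fun x => x 0 ∈ x 1



namespace IATight
open FirstOrder.Language FirstOrder.Language.BoundedFormula

abbrev BF (k : ℕ) := memLang.BoundedFormula (Fin 2) k
def mR : memLang.Relations 2 := memRel.mem
def memf {k} (i j : Fin k) : BF k := mR.boundedFormula₂ (&i) (&j)
def memP {k} (c : Fin 2) (i : Fin k) : BF k := mR.boundedFormula₂ (&i) (Term.var (Sum.inl c))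
def eqf {k} (i j : Fin k) : BF k := Term.bdEqual (&i) (&j)

@[simp] lemma realize_memf {k} (i j : Fin k) (v : Fin 2 → ZFSet) (xs : Fin k → ZFSet) :
    (memf i j).Realize v xs ↔ xs i ∈ xs j := Iff.rfl
@[simp] lemma realize_memP {k} (c : Fin 2) (i : Fin k) (v : Fin 2 → ZFSet) (xs : Fin k → ZFSet) :
    (memP c i).Realize v xs ↔ xs i ∈ v c := Iff.rfl
@[simp] lemma realize_eqf {k} (i j : Fin k) (v : Fin 2 → ZFSet) (xs : Fin k → ZFSet) :
    (eqf i j).Realize v xs ↔ xs i = xs j := by simp [eqf, Term.realize]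

/-- "T = {a}" -/
def isSingleton {k} (T a : Fin k) : BF k :=
  ∀' ((memf (Fin.last k) T.castSucc).iff (eqf (Fin.last k) a.castSucc))

@[simp] lemma realize_isSingleton {k} (T a : Fin k) (v : Fin 2 → ZFSet) (xs : Fin k → ZFSet) :
    (isSingleton T a).Realize v xs ↔ ∀ r, r ∈ xs T ↔ r = xs a := by
  simp [isSingleton, realize_all, realize_iff]

/-- "T = {a, b}" -/
def isUPair {k} (T a b : Fin k) : BF k :=
  ∀' ((memf (Fin.last k) T.castSucc).iff
      ((eqf (Fin.last k) a.castSucc) ⊔ (eqf (Fin.last k) b.castSucc)))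

@[simp] lemma realize_isUPair {k} (T a b : Fin k) (v : Fin 2 → ZFSet) (xs : Fin k → ZFSet) :
    (isUPair T a b).Realize v xs ↔ ∀ r, r ∈ xs T ↔ (r = xs a ∨ r = xs b) := by
  simp [isUPair, realize_all, realize_iff, realize_sup]

/-- "q = pair a b" (Kuratowski) -/
def isPair {k} (q a b : Fin k) : BF k :=
  ∀' ((memf (Fin.last k) q.castSucc).iff
      ((isSingleton (Fin.last k) a.castSucc) ⊔ (isUPair (Fin.last k) a.castSucc b.castSucc)))

@[simp] lemma realize_isPair {k} (q a b : Fin k) (v : Fin 2 → ZFSet) (xs : Fin k → ZFSet) :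
    (isPair q a b).Realize v xs ↔
      ∀ T, T ∈ xs q ↔ ((∀ r, r ∈ T ↔ r = xs a) ∨ (∀ r, r ∈ T ↔ (r = xs a ∨ r = xs b))) := by
  simp [isPair, realize_all, realize_iff, realize_sup]

lemma sing_char (T a : ZFSet) : (∀ r, r ∈ T ↔ r = a) ↔ T = {a} := by
  rw [ZFSet.ext_iff]; simp

lemma upair_char (T a b : ZFSet) : (∀ r, r ∈ T ↔ (r = a ∨ r = b)) ↔ T = {a, b} := by
  rw [ZFSet.ext_iff]; simp

lemma isPairOf_iff (q a b : ZFSet) :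
    (∀ T, T ∈ q ↔ ((∀ r, r ∈ T ↔ r = a) ∨ (∀ r, r ∈ T ↔ (r = a ∨ r = b)))) ↔
      q = ZFSet.pair a b := by
  simp only [sing_char, upair_char]
  rw [show ZFSet.pair a b = {{a},{a,b}} from rfl, ZFSet.ext_iff]


/-- "xs y belongs to some second coordinate of a pair in v 0" -/
def inW {k} (y : Fin k) : BF k :=
  ∃' ∃' ∃' (memP 0 ((Fin.last k).castSucc.castSucc) ⊓
      (isPair ((Fin.last k).castSucc.castSucc) ((Fin.last (k+1)).castSucc) (Fin.last (k+2)) ⊓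
       memf y.castSucc.castSucc.castSucc (Fin.last (k+2))))

@[simp] lemma realize_inW {k} (y : Fin k) (v : Fin 2 → ZFSet) (xs : Fin k → ZFSet) :
    (inW y).Realize v xs ↔
      ∃ q' a' x : ZFSet, q' ∈ v 0 ∧ (q' = ZFSet.pair a' x ∧ xs y ∈ x) := by
  simp [inW, realize_ex, realize_inf, isPairOf_iff]

def uElems {k} (u kk : Fin k) : BF k :=
  ∀' ((memf (Fin.last k) u.castSucc).iff
     (∃' (memf (Fin.last (k+1)) kk.castSucc.castSucc ⊓
        (inW (Fin.last (k+1)) ⊓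
         (memf ((Fin.last k).castSucc) (Fin.last (k+1)) ⊔
          eqf ((Fin.last k).castSucc) (Fin.last (k+1)))))))

@[simp] lemma realize_uElems {k} (u kk : Fin k) (v : Fin 2 → ZFSet) (xs : Fin k → ZFSet) :
    (uElems u kk).Realize v xs ↔
      ∀ w, w ∈ xs u ↔ ∃ y, y ∈ xs kk ∧
        ((∃ q' a' x : ZFSet, q' ∈ v 0 ∧ (q' = ZFSet.pair a' x ∧ y ∈ x)) ∧
          (w ∈ y ∨ w = y)) := by
  simp [uElems, realize_all, realize_iff, realize_ex, realize_inf, realize_sup]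

def psiF {k} (p : Fin k) : BF k :=
  ∃' ∃' ∃' ∃' (memP 1 ((Fin.last k).castSucc.castSucc.castSucc) ⊓
     (isPair ((Fin.last k).castSucc.castSucc.castSucc) ((Fin.last (k+1)).castSucc.castSucc)
        ((Fin.last (k+2)).castSucc) ⊓
      (isPair p.castSucc.castSucc.castSucc.castSucc ((Fin.last (k+1)).castSucc.castSucc)
        (Fin.last (k+3)) ⊓
       uElems (Fin.last (k+3)) ((Fin.last (k+2)).castSucc))))

@[simp] lemma realize_psiF {k} (p : Fin k) (v : Fin 2 → ZFSet) (xs : Fin k → ZFSet) :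
    (psiF p).Realize v xs ↔
      ∃ q a kk u : ZFSet, q ∈ v 1 ∧ (q = ZFSet.pair a kk ∧ (xs p = ZFSet.pair a u ∧
        ∀ w, w ∈ u ↔ ∃ y, y ∈ kk ∧
          ((∃ q' a' x : ZFSet, q' ∈ v 0 ∧ (q' = ZFSet.pair a' x ∧ y ∈ x)) ∧
            (w ∈ y ∨ w = y)))) := by
  simp [psiF, realize_ex, realize_inf, isPairOf_iff]

@[simp] lemma snoc_one_zero (xs : Fin 1 → ZFSet) (a : ZFSet) :
    (Fin.snoc xs a : Fin 2 → ZFSet) 0 = xs 0 := by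
  have h : ((0 : Fin 1)).castSucc = (0 : Fin 2) := rfl
  rw [← h, Fin.snoc_castSucc]

@[simp] lemma snoc_one_one (xs : Fin 1 → ZFSet) (a : ZFSet) :
    (Fin.snoc xs a : Fin 2 → ZFSet) 1 = a :=
  Fin.snoc_last (α := fun _ => ZFSet) (p := xs) (x := a)

def chiF : BF 1 :=
  ∀' ((memf (Fin.last 1) ((Fin.last 0).castSucc)).iff (psiF (Fin.last 1)))

lemma realize_chiF (v : Fin 2 → ZFSet) (xs : Fin 1 → ZFSet) :
    chiF.Realize v xs ↔
      ∀ p, p ∈ xs 0 ↔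
      ∃ q a kk u : ZFSet, q ∈ v 1 ∧ (q = ZFSet.pair a kk ∧ (p = ZFSet.pair a u ∧
        ∀ w, w ∈ u ↔ ∃ y, y ∈ kk ∧
          ((∃ q' a' x : ZFSet, q' ∈ v 0 ∧ (q' = ZFSet.pair a' x ∧ y ∈ x)) ∧
            (w ∈ y ∨ w = y)))) := by
  simp [chiF, realize_all, realize_iff]

end IATight


/-- if `M` is the limit of an IA chain of regular uncountable length `δ`,
`|M| < κ₀` and the increasing sequence of regular cardinals `⟨κₙ⟩` belongs to `M`, then
every function in `∏ₙ (M ∩ κₙ)` is pointwise dominated by a function (coded) in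
`M ∩ ∏ₙ κₙ`; hence `M` is tight for `⟨κₙ⟩`. -/
theorem IA_limit_tight
    (d : Cardinal) (hd : d.IsRegular) (hdunc : Cardinal.aleph0 < d)
    (δ : Ordinal) (hδ : δ = d.ord)
    (vnOrd : Ordinal → ZFSet)
    (hvn : ∀ α x, x ∈ vnOrd α ↔ ∃ β < α, x = vnOrd β)
    (M : Ordinal → memLang.ElementarySubstructure ZFSet)
    (memZ : Ordinal → ZFSet)
    (hmemZ : ∀ i, ∀ x : ZFSet, x ∈ memZ i ↔ x ∈ M i)
    (hmono : ∀ i j, i ≤ j → j < δ → (M i : Set ZFSet) ⊆ (M j : Set ZFSet))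
    (hcont : ∀ j < δ, Order.IsSuccLimit j → ∀ x : ZFSet, (x ∈ M j ↔ ∃ i < j, x ∈ M i))
    (hIA : ∀ j < δ, (∃ j', j = j' + 1) →
      ∃ s : ZFSet, s ∈ M j ∧
        ∀ x : ZFSet, (x ∈ s ↔ ∃ i < j, x = ZFSet.pair (vnOrd i) (memZ i)))
    (κ : ℕ → Cardinal) (hreg : ∀ n, (κ n).IsRegular) (hmonoκ : StrictMono κ)
    (hcard : Cardinal.mk {x : ZFSet | ∃ j < δ, x ∈ M j} < Cardinal.lift.{1, 0} (κ 0))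
    (hκM : ∃ s : ZFSet, (∃ j < δ, s ∈ M j) ∧
      ∀ x : ZFSet, (x ∈ s ↔ ∃ n : ℕ, x = ZFSet.pair (vnOrd n) (vnOrd (κ n).ord))) :
    ∀ g : ℕ → Ordinal,
      (∀ n, g n < (κ n).ord ∧ ∃ j < δ, vnOrd (g n) ∈ M j) →
      ∃ f : ℕ → Ordinal, (∀ n, f n < (κ n).ord) ∧
        (∃ sf : ZFSet, (∃ j < δ, sf ∈ M j) ∧
          ∀ x : ZFSet, (x ∈ sf ↔ ∃ n : ℕ, x = ZFSet.pair (vnOrd n) (vnOrd (f n)))) ∧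
        ∀ n, g n < f n := by
  classical
  intro g hg
  -- injectivity of vnOrd
  have hinj : Function.Injective vnOrd := by
    intro α β h
    by_contra hne
    rcases lt_or_gt_of_ne hne with hl | hl
    · have h2 : vnOrd α ∈ vnOrd β := (hvn β _).2 ⟨α, hl, rfl⟩
      rw [← h] at h2; exact ZFSet.mem_irrefl _ h2
    · have h2 : vnOrd β ∈ vnOrd α := (hvn α _).2 ⟨β, hl, rfl⟩
      rw [h] at h2; exact ZFSet.mem_irrefl _ h2
  -- find a stage i below δ containing all vnOrd (g n)
  choose jfun hjlt hjmem using fun n => (hg n).2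
  set i : Ordinal := ⨆ n, jfun n with hidef
  have hcof : Cardinal.aleph0 < δ.cof := by rw [hδ, hd.cof_eq]; exact hdunc
  have hiδ : i < δ := Ordinal.iSup_lt_ord (by rw [Cardinal.mk_nat]; exact hcof) hjlt
  have hgMi : ∀ n, vnOrd (g n) ∈ M i :=
    fun n => hmono (jfun n) i (Ordinal.le_iSup jfun n) hiδ (hjmem n)
  have hδlim : Order.IsSuccLimit δ := by rw [hδ]; exact Cardinal.isSuccLimit_ord hd.aleph0_le
  have hisucc : i + 1 < δ := by
    rw [Ordinal.add_one_eq_succ]; exact hδlim.succ_lt hiδ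
  obtain ⟨s, hsM, hs⟩ := hIA (i + 1) hisucc ⟨i, rfl⟩
  obtain ⟨sκ, ⟨j₀, hj₀δ, hsκM⟩, hsκ⟩ := hκM
  set j : Ordinal := max j₀ (i + 1) with hjdef
  have hjδ : j < δ := max_lt hj₀δ hisucc
  have hsMj : s ∈ M j := hmono _ _ (le_max_right _ _) hjδ hsM
  have hsκMj : sκ ∈ M j := hmono _ _ (le_max_left _ _) hjδ hsκM
  -- a small index type for the elements of the union of the chain
  set T : Set ZFSet := {x : ZFSet | ∃ j < δ, x ∈ M j} with hTdef
  obtain ⟨c₀, hc₀⟩ := Cardinal.mem_range_lift_of_le hcard.le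
  have hc₀lt : c₀ < κ 0 := by
    have h' := hcard; rw [← hc₀] at h'; exact Cardinal.lift_lt.mp h'
  have hee : Cardinal.lift.{1, 0} (Cardinal.mk c₀.out) = Cardinal.lift.{0, 1} (Cardinal.mk T) := by
    rw [Cardinal.mk_out, Cardinal.lift_uzero]; exact hc₀
  obtain ⟨e⟩ := Cardinal.lift_mk_eq'.mp hee
  -- the dominating function
  set F : ℕ → c₀.out → Ordinal := fun n b =>
    if h : ∃ α, α < (κ n).ord ∧ vnOrd α ∈ M i ∧ vnOrd α = (e b : ZFSet) then h.choose + 1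
    else 0 with hFdef
  set f : ℕ → Ordinal := fun n => ⨆ b, F n b with hfdef
  have hκlim : ∀ n, Order.IsSuccLimit ((κ n).ord) := fun n => Cardinal.isSuccLimit_ord (hreg n).aleph0_le
  have hFlt : ∀ n b, F n b < (κ n).ord := by
    intro n b
    rw [hFdef]
    dsimp only
    split
    · next h =>
      rw [Ordinal.add_one_eq_succ]
      exact (hκlim n).succ_lt h.choose_spec.1
    · exact (hreg n).ord_pos
  have hflt : ∀ n, f n < (κ n).ord := by
    intro n
    apply Ordinal.iSup_lt_ord _ (hFlt n)
    rw [Cardinal.mk_out, (hreg n).cof_eq]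
    exact lt_of_lt_of_le hc₀lt (hmonoκ.monotone (Nat.zero_le n))
  have hFval : ∀ n (α : Ordinal), α < (κ n).ord → vnOrd α ∈ M i →
      ∀ b, (e b : ZFSet) = vnOrd α → F n b = α + 1 := by
    intro n α hα hMα b hb
    have hex : ∃ β, β < (κ n).ord ∧ vnOrd β ∈ M i ∧ vnOrd β = (e b : ZFSet) :=
      ⟨α, hα, hMα, hb.symm⟩
    rw [hFdef]
    dsimp only
    rw [dif_pos hex]
    have : hex.choose = α := hinj (by rw [hex.choose_spec.2.2, hb])
    rw [this]
  have hbex : ∀ (α : Ordinal), vnOrd α ∈ M i → ∃ b, (e b : ZFSet) = vnOrd α := by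
    intro α hMα
    refine ⟨e.symm ⟨vnOrd α, ⟨i, hiδ, hMα⟩⟩, ?_⟩
    rw [Equiv.apply_symm_apply]
  -- membership characterization of vnOrd (f n)
  have hmemf : ∀ n w, w ∈ vnOrd (f n) ↔
      ∃ y, y ∈ vnOrd (κ n).ord ∧ (y ∈ M i) ∧ (w ∈ y ∨ w = y) := by
    intro n w
    rw [hvn]
    constructor
    · rintro ⟨β, hβ, rfl⟩
      rw [hfdef] at hβ
      dsimp only at hβ
      obtain ⟨b, hb⟩ := Ordinal.lt_iSup_iff.mp hβ
      by_cases hex : ∃ α, α < (κ n).ord ∧ vnOrd α ∈ M i ∧ vnOrd α = (e b : ZFSet)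
      · have hFb : F n b = hex.choose + 1 := by rw [hFdef]; dsimp only; rw [dif_pos hex]
        rw [hFb, Ordinal.add_one_eq_succ, Order.lt_succ_iff] at hb
        refine ⟨vnOrd hex.choose, (hvn _ _).2 ⟨hex.choose, hex.choose_spec.1, rfl⟩,
          hex.choose_spec.2.1, ?_⟩
        rcases lt_or_eq_of_le hb with hlt | heq
        · exact Or.inl ((hvn _ _).2 ⟨β, hlt, rfl⟩)
        · exact Or.inr (by rw [heq])
      · have hFb : F n b = 0 := by rw [hFdef]; dsimp only; rw [dif_neg hex]
        rw [hFb] at hb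
        exact absurd hb (by simp)
    · rintro ⟨y, hyκ, hyM, hwy⟩
      obtain ⟨α, hα, rfl⟩ := (hvn _ _).1 hyκ
      obtain ⟨b, hb⟩ := hbex α hyM
      have hFb : F n b = α + 1 := hFval n α hα hyM b hb
      have hle : α + 1 ≤ f n := by
        rw [hfdef]; dsimp only; rw [← hFb]; exact Ordinal.le_iSup (F n) b
      rcases hwy with hw | hw
      · obtain ⟨β, hβ, rfl⟩ := (hvn _ _).1 hw
        refine ⟨β, lt_of_lt_of_le (lt_of_lt_of_le hβ ?_) hle, rfl⟩
        rw [Ordinal.add_one_eq_succ]; exact (Order.le_succ α)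
      · refine ⟨α, lt_of_lt_of_le ?_ hle, hw⟩
        rw [Ordinal.add_one_eq_succ]; exact Order.lt_succ α
  -- characterization of "y is in the union of the chain coded by s"
  have hW : ∀ y : ZFSet,
      (∃ q' a' x : ZFSet, q' ∈ s ∧ (q' = ZFSet.pair a' x ∧ y ∈ x)) ↔ y ∈ M i := by
    intro y
    constructor
    · rintro ⟨q', a', x, hq's, hq'p, hyx⟩
      obtain ⟨i', hi', hq'⟩ := (hs q').1 hq's
      rw [hq'] at hq'p
      obtain ⟨h1, h2⟩ := ZFSet.pair_injective hq'p
      rw [← h2] at hyx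
      have hyMi' : y ∈ M i' := (hmemZ i' y).1 hyx
      have hle : i' ≤ i := by
        rw [Ordinal.add_one_eq_succ, Order.lt_succ_iff] at hi'; exact hi'
      exact hmono i' i hle hiδ hyMi'
    · intro hyM
      refine ⟨ZFSet.pair (vnOrd i) (memZ i), vnOrd i, memZ i, ?_, rfl, (hmemZ i y).2 hyM⟩
      apply (hs _).2
      exact ⟨i, by rw [Ordinal.add_one_eq_succ]; exact Order.lt_succ i, rfl⟩
  -- the function coded in M
  set sf : ZFSet := ZFSet.range (fun n : ℕ => ZFSet.pair (vnOrd n) (vnOrd (f n))) with hsfdef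
  have hsf : ∀ x : ZFSet, x ∈ sf ↔ ∃ n : ℕ, x = ZFSet.pair (vnOrd n) (vnOrd (f n)) := by
    intro x
    rw [hsfdef, ZFSet.mem_range]
    constructor
    · rintro ⟨n, rfl⟩; exact ⟨n, rfl⟩
    · rintro ⟨n, rfl⟩; exact ⟨n, rfl⟩
  -- the first-order characterization
  have hPsi : ∀ p : ZFSet,
      (∃ q a kk u : ZFSet, q ∈ sκ ∧ (q = ZFSet.pair a kk ∧ (p = ZFSet.pair a u ∧
        ∀ w, w ∈ u ↔ ∃ y, y ∈ kk ∧
          ((∃ q' a' x : ZFSet, q' ∈ s ∧ (q' = ZFSet.pair a' x ∧ y ∈ x)) ∧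
            (w ∈ y ∨ w = y))))) ↔
      ∃ n : ℕ, p = ZFSet.pair (vnOrd n) (vnOrd (f n)) := by
    intro p
    constructor
    · rintro ⟨q, a, kk, u, hqκ, hqp, hpp, hu⟩
      obtain ⟨n, hq⟩ := (hsκ q).1 hqκ
      rw [hq] at hqp
      obtain ⟨ha, hkk⟩ := ZFSet.pair_injective hqp
      have hueq : u = vnOrd (f n) := by
        apply ZFSet.ext
        intro w
        rw [hu w, hmemf n w]
        constructor
        · rintro ⟨y, hykk, hyW, hwy⟩
          exact ⟨y, by rw [hkk]; exact hykk, (hW y).1 hyW, hwy⟩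
        · rintro ⟨y, hyκ, hyM, hwy⟩
          exact ⟨y, by rw [← hkk]; exact hyκ, (hW y).2 hyM, hwy⟩
      exact ⟨n, by rw [hpp, hueq, ← ha]⟩
    · rintro ⟨n, rfl⟩
      refine ⟨ZFSet.pair (vnOrd n) (vnOrd (κ n).ord), vnOrd n, vnOrd (κ n).ord, vnOrd (f n),
        (hsκ _).2 ⟨n, rfl⟩, rfl, rfl, ?_⟩
      intro w
      rw [hmemf n w]
      constructor
      · rintro ⟨y, hyκ, hyM, hwy⟩
        exact ⟨y, hyκ, (hW y).2 hyM, hwy⟩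
      · rintro ⟨y, hyκ, hyW, hwy⟩
        exact ⟨y, hyκ, (hW y).1 hyW, hwy⟩
  -- realization of χ characterizes sf
  have hz : ∀ xs : Fin 1 → ZFSet, (IATight.chiF.Realize ![s, sκ] xs) ↔ xs 0 = sf := by
    intro xs
    rw [IATight.realize_chiF]
    have hv0 : (![s, sκ] : Fin 2 → ZFSet) 0 = s := rfl
    have hv1 : (![s, sκ] : Fin 2 → ZFSet) 1 = sκ := rfl
    rw [hv0, hv1]
    constructor
    · intro h
      apply ZFSet.ext
      intro p
      rw [hsf p, ← hPsi p]
      exact h p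
    · rintro hxs p
      rw [hxs, hsf p]
      exact (hPsi p).symm
  -- transfer through the elementary substructure M j
  have h1 : FirstOrder.Language.Formula.Realize (M := ZFSet) IATight.chiF.ex ![s, sκ] := by
    rw [FirstOrder.Language.Formula.Realize, FirstOrder.Language.BoundedFormula.realize_ex]
    refine ⟨sf, (hz _).2 ?_⟩
    rfl
  set xv : Fin 2 → (M j) := ![⟨s, hsMj⟩, ⟨sκ, hsκMj⟩] with hxvdef
  have hxv : (⇑(M j).subtype ∘ xv : Fin 2 → ZFSet) = ![s, sκ] := by
    funext k
    fin_cases k <;> rfl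
  have h2 : FirstOrder.Language.Formula.Realize (M := (M j)) IATight.chiF.ex xv :=
    ((M j).subtype.map_formula IATight.chiF.ex xv).mp (by rw [hxv]; exact h1)
  rw [FirstOrder.Language.Formula.Realize, FirstOrder.Language.BoundedFormula.realize_ex] at h2
  obtain ⟨zS, hzS⟩ := h2
  have h3 := ((M j).subtype.map_boundedFormula IATight.chiF (v := xv)
    (xs := Fin.snoc default zS)).mpr hzS
  have hsn : (⇑(M j).subtype ∘ (Fin.snoc (default : Fin 0 → (M j)) zS) : Fin 1 → ZFSet) =
      fun _ => (zS : ZFSet) := by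
    funext k
    have hk : k = 0 := Subsingleton.elim _ _
    rw [hk]
    rfl
  rw [hxv, hsn] at h3
  have hzsf : (zS : ZFSet) = sf := (hz _).1 h3
  refine ⟨f, hflt, ⟨sf, ⟨j, hjδ, ?_⟩, hsf⟩, ?_⟩
  · rw [← hzsf]; exact zS.2
  · intro n
    obtain ⟨b, hb⟩ := hbex (g n) (hgMi n)
    have hFb : F n b = g n + 1 := hFval n (g n) (hg n).1 (hgMi n) b hb
    have hle : g n + 1 ≤ f n := by
      rw [hfdef]; dsimp only; rw [← hFb]; exact Ordinal.le_iSup (F n) b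
    exact lt_of_lt_of_le (by rw [Ordinal.add_one_eq_succ]; exact Order.lt_succ (g n)) hle
end

section
/- Let M ≺ 𝔄 be a tight structure for ⟨κₙ⟩ containing a scale f⃗ = ⟨f_α : α < λ⟩ on ∏ₙ κₙ, with |M| < κ₀, and let δ = sup(M ∩ λ). Then the characteristic function χ_M (χ_M(n) = sup(M ∩ κₙ)) is an exact upper bound of f⃗ ↾ δ. -/
open Filter

/-- `f <* g` : eventual (mod finite) domination. -/
def evDom (f g : ℕ → Ordinal) : Prop := ∀ᶠ n in atTop, f n < g n

/-- if `M` (with ordinal part `Mord` and function part `Mfun`) is a tight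
structure of size `< κ₀` containing a scale `⟨f α : α < λ⟩` on `∏ₙ κₙ`, and
`δ = sup(M ∩ λ)`, then the characteristic function `χ_M(n) = sup(M ∩ κₙ)` is an exact
upper bound of `f ↾ δ`. -/
theorem char_function_eub (κ : ℕ → Cardinal)
    (hreg : ∀ n, (κ n).IsRegular) (hmonoκ : StrictMono κ)
    (lam : Ordinal) (hlam : (⨆ n, κ n).ord < lam) (hlamlim : Order.IsSuccLimit lam)
    (f : Ordinal → ℕ → Ordinal)
    (hinc : ∀ α β, α < β → β < lam → evDom (f α) (f β))
    (hbd : ∀ α < lam, ∀ᶠ n in atTop, f α n < (κ n).ord)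
    (hcofinal : ∀ g : ℕ → Ordinal, (∀ n, g n < (κ n).ord) → ∃ α < lam, evDom g (f α))
    (Mord : Set Ordinal.{0}) (Mfun : Set (ℕ → Ordinal))
    (hcard : Cardinal.mk Mord < Cardinal.lift.{1} (κ 0))
    (hvals : ∀ g ∈ Mfun, ∀ n, g n ∈ Mord)
    (hsucc : ∀ α ∈ Mord, α + 1 ∈ Mord)
    (hscaleM : ∀ α ∈ Mord, α < lam → f α ∈ Mfun)
    (hMcofinal : ∀ g ∈ Mfun, (∀ᶠ n in atTop, g n < (κ n).ord) →
      ∃ α ∈ Mord, α < lam ∧ evDom g (f α))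
    (hMne : ∀ n, ∃ α ∈ Mord, α < (κ n).ord)
    (htight : ∀ g : ℕ → Ordinal, (∀ n, g n ∈ Mord ∧ g n < (κ n).ord) →
      ∃ h ∈ Mfun, (∀ n, h n < (κ n).ord) ∧ ∀ n, g n < h n)
    (δ : Ordinal) (hδ : δ = sSup (Mord ∩ Set.Iio lam))
    (χ : ℕ → Ordinal) (hχ : ∀ n, χ n = sSup (Mord ∩ Set.Iio (κ n).ord)) :
    (∀ α < δ, evDom (f α) χ) ∧
      ∀ h : ℕ → Ordinal, (∀ n, h n < χ n) → ∃ α < δ, evDom h (f α) := by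
  have hκlim : ∀ n, Order.IsSuccLimit ((κ n).ord) := fun n => Cardinal.isSuccLimit_ord (hreg n).aleph0_le
  have hbdd : ∀ c : Ordinal, BddAbove (Mord ∩ Set.Iio c) := fun c =>
    BddAbove.mono Set.inter_subset_right ⟨c, fun x hx => le_of_lt hx⟩
  have hneκ : ∀ n, (Mord ∩ Set.Iio (κ n).ord).Nonempty := fun n => by
    obtain ⟨α, hα, hακ⟩ := hMne n
    exact ⟨α, hα, hακ⟩
  have hmem_lt_χ : ∀ n α, α ∈ Mord → α < (κ n).ord → α < χ n := by
    intro n α hα hκ'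
    rw [hχ]
    have h1 : α + 1 ∈ Mord ∩ Set.Iio (κ n).ord :=
      ⟨hsucc α hα, by
        rw [Set.mem_Iio, Ordinal.add_one_eq_succ]; exact (hκlim n).succ_lt hκ'⟩
    have h2 : α < α + 1 := by
      rw [Ordinal.add_one_eq_succ]; exact Order.lt_succ α
    exact lt_of_lt_of_le h2 (le_csSup (hbdd _) h1)
  constructor
  · intro α hα
    rw [hδ] at hα
    have hne : (Mord ∩ Set.Iio lam).Nonempty := by
      obtain ⟨β, hβ, hβκ⟩ := hMne 0
      refine ⟨β, hβ, lt_trans hβκ (lt_of_le_of_lt ?_ hlam)⟩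
      exact Cardinal.ord_le_ord.2 (le_ciSup (Cardinal.bddAbove_range _) 0)
    obtain ⟨β, ⟨hβM, hβlam⟩, hαβ⟩ := exists_lt_of_lt_csSup hne hα
    have hfβ := hscaleM β hβM hβlam
    filter_upwards [hinc α β hαβ hβlam, hbd β hβlam] with n hn1 hn2
    exact lt_trans hn1 (hmem_lt_χ n _ (hvals _ hfβ n) hn2)
  · intro h hh
    have hg : ∀ n, ∃ β, (β ∈ Mord ∧ β < (κ n).ord) ∧ h n < β := by
      intro n
      have hn := hh n
      rw [hχ n] at hn
      obtain ⟨β, ⟨h1, h2⟩, h3⟩ := exists_lt_of_lt_csSup (hneκ n) hn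
      exact ⟨β, ⟨h1, h2⟩, h3⟩
    choose g hg1 hg2 using hg
    obtain ⟨h', hh'M, hh'κ, hgh'⟩ := htight g hg1
    obtain ⟨α, hαM, hαlam, hdom⟩ := hMcofinal h' hh'M (Eventually.of_forall hh'κ)
    refine ⟨α, ?_, ?_⟩
    · rw [hδ]
      have h1 : α + 1 ∈ Mord ∩ Set.Iio lam :=
        ⟨hsucc α hαM, by
          rw [Set.mem_Iio, Ordinal.add_one_eq_succ]; exact hlamlim.succ_lt hαlam⟩
      have h2 : α < α + 1 := by
        rw [Ordinal.add_one_eq_succ]; exact Order.lt_succ α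
      exact lt_of_lt_of_le h2 (le_csSup (hbdd _) h1)
    · filter_upwards [hdom] with n hn
      exact lt_trans (lt_trans (hg2 n) (hgh' n)) hn
end

section
/- Let x, x' ∈ [λₙ]^{<κₙ} realize the same type in 𝔄_{n,k} (k ≥ 2, under GCH). Then: (1) otp(x) = otp(x'); (2) for α ∈ x and the corresponding α' ∈ x' under the order isomorphism, Eₙ(α) = Eₙ(α'); (3) for α ≤_{Eₙ} β in x and corresponding α', β' in x', π_{β,α} = π_{β',α'}. -/
open FirstOrder

open FirstOrder.Language

namespace TDExt
variable {L : FirstOrder.Language.{0,0}} [L.Structure ZFSet]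

def lift1 {α : Type} {n : ℕ} (a : α ⊕ Fin n) : α ⊕ Fin (n+1) := Sum.map id Fin.castSucc a
def bv {α : Type} {n : ℕ} : α ⊕ Fin (n+1) := Sum.inr (Fin.last n)

@[simp] lemma elim_snoc_lift1 {α : Type} {n : ℕ} (v : α → ZFSet) (xs : Fin n → ZFSet)
    (z : ZFSet) (a : α ⊕ Fin n) :
    Sum.elim v (Fin.snoc xs z) (lift1 a) = Sum.elim v xs a := by
  cases a <;> simp [lift1]

@[simp] lemma elim_snoc_bv {α : Type} {n : ℕ} (v : α → ZFSet) (xs : Fin n → ZFSet)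
    (z : ZFSet) : Sum.elim v (Fin.snoc xs z) (bv : α ⊕ Fin (n+1)) = z := by
  simp [bv]

lemma realize_fin0 {α : Type} (φ : L.Formula α) (v : α → ZFSet) (xs : Fin 0 → ZFSet) :
    φ.Realize v ↔ BoundedFormula.Realize φ v xs :=
  iff_of_eq (congrArg (BoundedFormula.Realize φ v) (Subsingleton.elim _ _))

def sub2 (φ : L.Formula (Fin 2)) {α : Type} {n : ℕ} (a b : α ⊕ Fin n) :
    L.BoundedFormula α n :=
  (BoundedFormula.relabel ![a, b] φ : L.BoundedFormula α (n + 0))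

@[simp] lemma realize_sub2 (φ : L.Formula (Fin 2)) {α : Type} {n : ℕ} (a b : α ⊕ Fin n)
    (v : α → ZFSet) (xs : Fin n → ZFSet) :
    (sub2 φ a b).Realize v xs ↔ φ.Realize ![Sum.elim v xs a, Sum.elim v xs b] := by
  rw [sub2, BoundedFormula.realize_relabel]
  have h1 : (Sum.elim v (xs ∘ Fin.castAdd 0) ∘ ![a, b]) = ![Sum.elim v xs a, Sum.elim v xs b] := by
    funext i
    have : (xs ∘ Fin.castAdd 0) = xs := by
      funext j; simp [Fin.castAdd, Fin.castLE]
    fin_cases i <;> simp [this]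
  rw [h1, ← realize_fin0]

def sub1 (ψ : L.Formula Unit) {α : Type} {n : ℕ} (a : α ⊕ Fin n) :
    L.BoundedFormula α n :=
  (BoundedFormula.relabel (fun _ => a) ψ : L.BoundedFormula α (n + 0))

@[simp] lemma realize_sub1 (ψ : L.Formula Unit) {α : Type} {n : ℕ} (a : α ⊕ Fin n)
    (v : α → ZFSet) (xs : Fin n → ZFSet) :
    (sub1 ψ a).Realize v xs ↔ ψ.Realize (fun _ => Sum.elim v xs a) := by
  rw [sub1, BoundedFormula.realize_relabel]
  have h1 : (Sum.elim v (xs ∘ Fin.castAdd 0) ∘ (fun _ : Unit => a)) = fun _ => Sum.elim v xs a := by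
    funext i
    have : (xs ∘ Fin.castAdd 0) = xs := by
      funext j; simp [Fin.castAdd, Fin.castLE]
    simp [this]
  rw [h1, ← realize_fin0]

def eqB {α : Type} {n : ℕ} (a b : α ⊕ Fin n) : L.BoundedFormula α n :=
  Term.bdEqual (Term.var a) (Term.var b)

@[simp] lemma realize_eqB {α : Type} {n : ℕ} (a b : α ⊕ Fin n)
    (v : α → ZFSet) (xs : Fin n → ZFSet) :
    (eqB (L := L) a b).Realize v xs ↔ Sum.elim v xs a = Sum.elim v xs b := by
  simp [eqB, BoundedFormula.realize_bdEqual, Term.realize_var]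

section withmem
variable (φmem : L.Formula (Fin 2))

/-- semantic: Kuratowski-pair description -/
def IsPairZ (p u w : ZFSet) : Prop :=
  ∀ q, q ∈ p ↔ ((∀ r, r ∈ q ↔ r = u) ∨ (∀ r, r ∈ q ↔ (r = u ∨ r = w)))

def PairMemZ (f u w : ZFSet) : Prop := ∃ p, p ∈ f ∧ IsPairZ p u w

def IsoZ (a b : ZFSet) : Prop :=
  ∃ f : ZFSet,
    (∀ u, u ∈ a → ∃ w, w ∈ b ∧ PairMemZ f u w) ∧
    (∀ w, w ∈ b → ∃ u, u ∈ a ∧ PairMemZ f u w) ∧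
    (∀ u w u' w', PairMemZ f u w → PairMemZ f u' w' → (u ∈ u' ↔ w ∈ w'))

/-- formula: `p` is the Kuratowski pair of `u` and `w` -/
def isPairB {α : Type} {n : ℕ} (p u w : α ⊕ Fin n) : L.BoundedFormula α n :=
  BoundedFormula.all
    ((sub2 φmem bv (lift1 p)).iff
      ((BoundedFormula.all ((sub2 φmem bv (lift1 bv)).iff (eqB bv (lift1 (lift1 u))))) ⊔
       (BoundedFormula.all ((sub2 φmem bv (lift1 bv)).iff
          ((eqB bv (lift1 (lift1 u))) ⊔ (eqB bv (lift1 (lift1 w))))))))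

lemma realize_isPairB (hφmem : ∀ a b : ZFSet, φmem.Realize ![a, b] ↔ a ∈ b)
    {α : Type} {n : ℕ} (p u w : α ⊕ Fin n)
    (v : α → ZFSet) (xs : Fin n → ZFSet) :
    (isPairB φmem p u w).Realize v xs ↔
      IsPairZ (Sum.elim v xs p) (Sum.elim v xs u) (Sum.elim v xs w) := by
  simp [isPairB, IsPairZ, BoundedFormula.realize_iff, hφmem]

def pairMemB {α : Type} {n : ℕ} (f u w : α ⊕ Fin n) : L.BoundedFormula α n :=
  BoundedFormula.ex ((sub2 φmem bv (lift1 f)) ⊓ isPairB φmem bv (lift1 u) (lift1 w))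

lemma realize_pairMemB (hφmem : ∀ a b : ZFSet, φmem.Realize ![a, b] ↔ a ∈ b)
    {α : Type} {n : ℕ} (f u w : α ⊕ Fin n)
    (v : α → ZFSet) (xs : Fin n → ZFSet) :
    (pairMemB φmem f u w).Realize v xs ↔
      PairMemZ (Sum.elim v xs f) (Sum.elim v xs u) (Sum.elim v xs w) := by
  simp [pairMemB, PairMemZ, realize_isPairB φmem hφmem, hφmem]


def isoB {α : Type} {n : ℕ} (a b : α ⊕ Fin n) : L.BoundedFormula α n :=
  BoundedFormula.ex
    (((BoundedFormula.all ((sub2 φmem bv (lift1 (lift1 a))).imp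
        (BoundedFormula.ex ((sub2 φmem bv (lift1 (lift1 (lift1 b)))) ⊓
          pairMemB φmem (lift1 (lift1 (bv : α ⊕ Fin (n+1)))) (lift1 (bv : α ⊕ Fin (n+2))) bv)))) ⊓
      (BoundedFormula.all ((sub2 φmem bv (lift1 (lift1 b))).imp
        (BoundedFormula.ex ((sub2 φmem bv (lift1 (lift1 (lift1 a)))) ⊓
          pairMemB φmem (lift1 (lift1 (bv : α ⊕ Fin (n+1)))) bv (lift1 (bv : α ⊕ Fin (n+2)))))))) ⊓
     (BoundedFormula.all (BoundedFormula.all (BoundedFormula.all (BoundedFormula.all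
       ((pairMemB φmem (lift1 (lift1 (lift1 (lift1 (bv : α ⊕ Fin (n+1))))))
            (lift1 (lift1 (lift1 (bv : α ⊕ Fin (n+2))))) (lift1 (lift1 (bv : α ⊕ Fin (n+3))))).imp
        ((pairMemB φmem (lift1 (lift1 (lift1 (lift1 (bv : α ⊕ Fin (n+1))))))
            (lift1 (bv : α ⊕ Fin (n+4))) (bv : α ⊕ Fin (n+5))).imp
         ((sub2 φmem (lift1 (lift1 (lift1 (bv : α ⊕ Fin (n+2))))) (lift1 (bv : α ⊕ Fin (n+4)))).iff
          (sub2 φmem (lift1 (lift1 (bv : α ⊕ Fin (n+3)))) (bv : α ⊕ Fin (n+5)))))))))))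

lemma realize_isoB (hφmem : ∀ a b : ZFSet, φmem.Realize ![a, b] ↔ a ∈ b)
    {α : Type} {n : ℕ} (a b : α ⊕ Fin n)
    (v : α → ZFSet) (xs : Fin n → ZFSet) :
    (isoB φmem a b).Realize v xs ↔ IsoZ (Sum.elim v xs a) (Sum.elim v xs b) := by
  simp [isoB, IsoZ, realize_pairMemB φmem hφmem, hφmem, BoundedFormula.realize_iff, and_assoc]

/-- semantic counterpart of `posB` -/
def PosZ (V Z : ZFSet) (P : ZFSet → Prop) : Prop :=
  ∃ w, (∀ r, r ∈ w ↔ r ∈ V ∧ r ∈ Z) ∧ ∃ s, P s ∧ IsoZ w s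

def posB (ψ : L.Formula Unit) {α : Type} {n : ℕ} (vv z : α ⊕ Fin n) :
    L.BoundedFormula α n :=
  BoundedFormula.ex
    ((BoundedFormula.all ((sub2 φmem bv (lift1 (bv : α ⊕ Fin (n+1)))).iff
        ((sub2 φmem bv (lift1 (lift1 vv))) ⊓ (sub2 φmem bv (lift1 (lift1 z)))))) ⊓
     BoundedFormula.ex ((sub1 ψ bv) ⊓ isoB φmem (lift1 (bv : α ⊕ Fin (n+1))) bv))

lemma realize_posB (hφmem : ∀ a b : ZFSet, φmem.Realize ![a, b] ↔ a ∈ b)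
    (ψ : L.Formula Unit) {α : Type} {n : ℕ} (vv z : α ⊕ Fin n)
    (v : α → ZFSet) (xs : Fin n → ZFSet) :
    (posB φmem ψ vv z).Realize v xs ↔
      PosZ (Sum.elim v xs vv) (Sum.elim v xs z) (fun s => ψ.Realize fun _ => s) := by
  simp [posB, PosZ, realize_isoB φmem hφmem, hφmem, BoundedFormula.realize_iff]

/-- `∃ s, ψ(s) ∧ Iso(v, s)` -/
def thetaA (ψ : L.Formula Unit) : L.Formula Unit :=
  BoundedFormula.ex ((sub1 ψ bv) ⊓ isoB φmem (Sum.inl ()) bv)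

lemma realize_thetaA (hφmem : ∀ a b : ZFSet, φmem.Realize ![a, b] ↔ a ∈ b)
    (ψ : L.Formula Unit) (V : ZFSet) :
    ((thetaA φmem ψ).Realize fun _ => V) ↔ ∃ s, (ψ.Realize fun _ => s) ∧ IsoZ V s := by
  rw [Formula.Realize]
  simp [thetaA, realize_isoB φmem hφmem]

/-- `∃ z ∈ v, χ(z) ∧ pos(v,z) ≃ ψγ` -/
def thetaE (ψγ χ : L.Formula Unit) : L.Formula Unit :=
  BoundedFormula.ex ((sub2 φmem bv (Sum.inl ())) ⊓ ((sub1 χ bv) ⊓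
    posB φmem ψγ (Sum.inl ()) bv))

lemma realize_thetaE (hφmem : ∀ a b : ZFSet, φmem.Realize ![a, b] ↔ a ∈ b)
    (ψγ χ : L.Formula Unit) (V : ZFSet) :
    ((thetaE φmem ψγ χ).Realize fun _ => V) ↔
      ∃ z, z ∈ V ∧ (χ.Realize fun _ => z) ∧
        PosZ V z (fun s => ψγ.Realize fun _ => s) := by
  rw [Formula.Realize]
  simp [thetaE, realize_posB φmem hφmem, hφmem]

def theta2 (ψ1 ψ2 : L.Formula Unit) (χle χπ : L.Formula (Fin 2)) : L.Formula Unit :=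
  BoundedFormula.ex (BoundedFormula.ex
    (((sub2 φmem (lift1 (bv : Unit ⊕ Fin 1)) (Sum.inl ())) ⊓
      (sub2 φmem (bv : Unit ⊕ Fin 2) (Sum.inl ()))) ⊓
     (((posB φmem ψ1 (Sum.inl ()) (lift1 (bv : Unit ⊕ Fin 1))) ⊓
       (posB φmem ψ2 (Sum.inl ()) (bv : Unit ⊕ Fin 2))) ⊓
      ((sub2 χle (lift1 (bv : Unit ⊕ Fin 1)) (bv : Unit ⊕ Fin 2)) ⊓
       (sub2 χπ (bv : Unit ⊕ Fin 2) (lift1 (bv : Unit ⊕ Fin 1)))))))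

lemma realize_theta2 (hφmem : ∀ a b : ZFSet, φmem.Realize ![a, b] ↔ a ∈ b)
    (ψ1 ψ2 : L.Formula Unit) (χle χπ : L.Formula (Fin 2)) (V : ZFSet) :
    ((theta2 φmem ψ1 ψ2 χle χπ).Realize fun _ => V) ↔
      ∃ z1 z2, (z1 ∈ V ∧ z2 ∈ V) ∧
        (PosZ V z1 (fun s => ψ1.Realize fun _ => s) ∧
         PosZ V z2 (fun s => ψ2.Realize fun _ => s)) ∧
        (χle.Realize ![z1, z2] ∧ χπ.Realize ![z2, z1]) := by
  rw [Formula.Realize]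
  simp [theta2, realize_posB φmem hφmem, hφmem]

lemma isPairZ_iff (p u w : ZFSet) : IsPairZ p u w ↔ p = ZFSet.pair u w := by
  constructor
  · intro h
    apply ZFSet.ext
    intro q
    rw [h q, ZFSet.pair, ZFSet.mem_insert_iff, ZFSet.mem_singleton]
    constructor
    · rintro (h1 | h1)
      · left; apply ZFSet.ext; intro r; rw [h1 r, ZFSet.mem_singleton]
      · right; apply ZFSet.ext; intro r; rw [h1 r, ZFSet.mem_insert_iff, ZFSet.mem_singleton]
    · rintro (rfl | rfl)
      · left; intro r; rw [ZFSet.mem_singleton]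
      · right; intro r; rw [ZFSet.mem_insert_iff, ZFSet.mem_singleton]
  · rintro rfl
    intro q
    rw [ZFSet.pair, ZFSet.mem_insert_iff, ZFSet.mem_singleton]
    constructor
    · rintro (rfl | rfl)
      · left; intro r; rw [ZFSet.mem_singleton]
      · right; intro r; rw [ZFSet.mem_insert_iff, ZFSet.mem_singleton]
    · rintro (h1 | h1)
      · left; apply ZFSet.ext; intro r; rw [h1 r, ZFSet.mem_singleton]
      · right; apply ZFSet.ext; intro r; rw [h1 r, ZFSet.mem_insert_iff, ZFSet.mem_singleton]

lemma pairMemZ_iff (f u w : ZFSet) : PairMemZ f u w ↔ ZFSet.pair u w ∈ f := by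
  constructor
  · rintro ⟨p, hp, hpair⟩
    rwa [(isPairZ_iff p u w).mp hpair] at hp
  · intro h
    exact ⟨_, h, (isPairZ_iff _ u w).mpr rfl⟩

instance (s : Set Ordinal.{0}) :
    IsWellOrder (Subtype s) (Subrel ((· < ·) : Ordinal.{0} → Ordinal.{0} → Prop) s) :=
  inferInstanceAs (IsWellOrder _ (Subrel ((· < ·) : Ordinal.{0} → Ordinal.{0} → Prop) (· ∈ s)))

noncomputable def ordT (s : Set Ordinal.{0}) : Ordinal.{1} :=
  Ordinal.type (Subrel ((· < ·) : Ordinal.{0} → Ordinal.{0} → Prop) s)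

lemma ordT_Iio (γ : Ordinal.{0}) : ordT (Set.Iio γ) = Ordinal.lift.{1} γ := by
  have h1 : ordT (Set.Iio γ) = (Ordinal.typein ((· < ·) : Ordinal.{0} → Ordinal.{0} → Prop)).toRelEmbedding γ :=
    Ordinal.type_subrel _ γ
  rw [h1, PrincipalSeg.eq (Ordinal.typein _) Ordinal.liftPrincipalSeg.{0,1} γ]
  rfl

lemma nonempty_orderIso_iff (s t : Set Ordinal.{0}) :
    Nonempty (s ≃o t) ↔ ordT s = ordT t := by
  rw [ordT, ordT, Ordinal.type_eq]
  constructor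
  · rintro ⟨e⟩
    exact ⟨⟨e.toEquiv, by intro a b; exact e.lt_iff_lt⟩⟩
  · rintro ⟨g⟩
    exact ⟨OrderIso.ofRelIsoLT g⟩

lemma ordT_inter_eq_typein (s : Set Ordinal.{0}) (a : Ordinal) (ha : a ∈ s) :
    ordT (s ∩ Set.Iio a) =
      (Ordinal.typein (Subrel ((· < ·) : Ordinal.{0} → Ordinal.{0} → Prop) s)).toRelEmbedding
        ⟨a, ha⟩ := by
  rw [← Ordinal.type_subrel]
  refine (Ordinal.type_eq.mpr ⟨?_⟩).symm
  exact ⟨⟨fun c => ⟨c.1.1, c.1.2, c.2⟩, fun c => ⟨⟨c.1, c.2.1⟩, c.2.2⟩,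
    fun c => rfl, fun c => rfl⟩, Iff.rfl⟩

lemma pos_inj {s : Set Ordinal.{0}} {a b : Ordinal} (ha : a ∈ s) (hb : b ∈ s)
    (h : ordT (s ∩ Set.Iio a) = ordT (s ∩ Set.Iio b)) : a = b := by
  rw [ordT_inter_eq_typein s a ha, ordT_inter_eq_typein s b hb] at h
  have := (Ordinal.typein_inj (Subrel ((· < ·) : Ordinal.{0} → Ordinal.{0} → Prop) s)).mp h
  exact congrArg Subtype.val this


lemma pos_map {s t : Set Ordinal.{0}} (e : s ≃o t) (a : Ordinal) (ha : a ∈ s) :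
    ordT (s ∩ Set.Iio a) = ordT (t ∩ Set.Iio (e ⟨a, ha⟩ : t)) := by
  rw [← nonempty_orderIso_iff]
  refine ⟨⟨⟨fun c => ⟨(e ⟨c.1, c.2.1⟩ : t), (e ⟨c.1, c.2.1⟩).2, ?_⟩,
    fun c => ⟨(e.symm ⟨c.1, c.2.1⟩ : s), (e.symm ⟨c.1, c.2.1⟩).2, ?_⟩, ?_, ?_⟩, ?_⟩⟩
  · have : (⟨c.1, c.2.1⟩ : s) < ⟨a, ha⟩ := c.2.2
    exact e.lt_iff_lt.mpr this
  · have hlt : (⟨c.1, c.2.1⟩ : t) < e ⟨a, ha⟩ := c.2.2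
    have := e.symm.lt_iff_lt.mpr hlt
    rwa [OrderIso.symm_apply_apply] at this
  · intro c
    ext
    simp
  · intro c
    ext
    simp
  · intro c d
    simp only [Equiv.coe_fn_mk, Subtype.mk_le_mk, Subtype.coe_le_coe, e.le_iff_le]
    exact e.le_iff_le

lemma exists_ordT_lt (κc : Cardinal.{0}) (s : Set Ordinal.{0})
    (h : Cardinal.mk s < Cardinal.lift.{1,0} κc) :
    ∃ γ : Ordinal.{0}, γ < κc.ord ∧ ordT s = Ordinal.lift.{1} γ := by
  have h1 : ordT s < (Cardinal.lift.{1,0} κc).ord := by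
    rw [Cardinal.lt_ord, ordT, Ordinal.card_type]
    exact h
  rw [← Cardinal.lift_ord] at h1
  obtain ⟨γ, hγ⟩ := Ordinal.mem_range_lift_of_le h1.le
  exact ⟨γ, by rwa [← hγ, Ordinal.lift_lt] at h1, hγ.symm⟩



section vn
variable (vnOrd : Ordinal.{0} → ZFSet) (hvn : ∀ α x, x ∈ vnOrd α ↔ ∃ β < α, x = vnOrd β)

include hvn

lemma vn_mem {a b : Ordinal} (h : a < b) : vnOrd a ∈ vnOrd b :=
  (hvn b _).mpr ⟨a, h, rfl⟩

lemma vn_inj : Function.Injective vnOrd := by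
  intro a b h
  by_contra hne
  rcases lt_or_gt_of_ne hne with hlt | hlt
  · exact ZFSet.mem_irrefl _ (h ▸ vn_mem vnOrd hvn hlt)
  · exact ZFSet.mem_irrefl _ (h ▸ vn_mem vnOrd hvn hlt)

lemma vn_mem_iff {a b : Ordinal} : vnOrd a ∈ vnOrd b ↔ a < b := by
  constructor
  · intro h
    obtain ⟨c, hc, hceq⟩ := (hvn b _).mp h
    rwa [vn_inj vnOrd hvn hceq]
  · exact vn_mem vnOrd hvn

/-- `sz` is the `vnOrd`-coding of the set of ordinals `s` -/
def Codes (sz : ZFSet) (s : Set Ordinal.{0}) : Prop :=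
  ∀ y, y ∈ sz ↔ ∃ a ∈ s, y = vnOrd a

lemma codes_vn_Iio (γ : Ordinal) : Codes vnOrd (vnOrd γ) (Set.Iio γ) := by
  intro y
  rw [hvn]
  constructor
  · rintro ⟨β, h, rfl⟩; exact ⟨β, h, rfl⟩
  · rintro ⟨β, h, rfl⟩; exact ⟨β, h, rfl⟩

lemma codes_inter_spec {sz : ZFSet} {s : Set Ordinal} (hs : Codes vnOrd sz s)
    (a : Ordinal) (w : ZFSet) (hw : ∀ r, r ∈ w ↔ r ∈ sz ∧ r ∈ vnOrd a) :
    Codes vnOrd w (s ∩ Set.Iio a) := by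
  intro y
  rw [hw, hs y, hvn]
  constructor
  · rintro ⟨⟨b, hb, rfl⟩, ⟨c, hc, hcc⟩⟩
    exact ⟨b, ⟨hb, by rw [Set.mem_Iio]; exact (vn_inj vnOrd hvn hcc) ▸ hc⟩, rfl⟩
  · rintro ⟨b, ⟨hb, hb2⟩, rfl⟩
    exact ⟨⟨b, hb, rfl⟩, ⟨b, hb2, rfl⟩⟩

/-- the key semantic bridge: the first-order isomorphism statement between two coded sets of
ordinals is equivalent to them being order isomorphic -/
lemma isoZ_iff_orderIso {sz tz : ZFSet} {s t : Set Ordinal}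
    (hs : Codes vnOrd sz s) (ht : Codes vnOrd tz t) :
    IsoZ sz tz ↔ Nonempty (s ≃o t) := by
  constructor
  · rintro ⟨f, c2, c3, c4⟩
    have key : ∀ a : s, ∃ b : t, PairMemZ f (vnOrd a) (vnOrd b) := by
      rintro ⟨a, ha⟩
      obtain ⟨w, hw, hpm⟩ := c2 (vnOrd a) ((hs _).mpr ⟨a, ha, rfl⟩)
      obtain ⟨b, hb, rfl⟩ := (ht w).mp hw
      exact ⟨⟨b, hb⟩, hpm⟩
    choose g hg using key
    have hmono : StrictMono g := by
      intro a b hab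
      have := c4 _ _ _ _ (hg a) (hg b)
      have h2 : vnOrd (g a) ∈ vnOrd (g b) :=
        this.mp ((vn_mem_iff vnOrd hvn).mpr (by exact_mod_cast hab))
      exact_mod_cast (vn_mem_iff vnOrd hvn).mp h2
    have hsurj : Function.Surjective g := by
      rintro ⟨b, hb⟩
      obtain ⟨u, hu, hpm⟩ := c3 (vnOrd b) ((ht _).mpr ⟨b, hb, rfl⟩)
      obtain ⟨a, ha, rfl⟩ := (hs u).mp hu
      refine ⟨⟨a, ha⟩, ?_⟩
      have h1 := c4 _ _ _ _ hpm (hg ⟨a, ha⟩)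
      have h2 := c4 _ _ _ _ (hg ⟨a, ha⟩) hpm
      have hne1 : ¬ (vnOrd b ∈ vnOrd (g ⟨a, ha⟩)) :=
        fun hmem => ZFSet.mem_irrefl _ (h1.mpr hmem)
      have hne2 : ¬ (vnOrd (g ⟨a, ha⟩) ∈ vnOrd b) :=
        fun hmem => ZFSet.mem_irrefl _ (h2.mpr hmem)
      have : (g ⟨a, ha⟩ : Ordinal) = b := by
        rcases lt_trichotomy (g ⟨a, ha⟩ : Ordinal) b with h | h | h
        · exact absurd ((vn_mem_iff vnOrd hvn).mpr h) hne2
        · exact h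
        · exact absurd ((vn_mem_iff vnOrd hvn).mpr h) hne1
      exact Subtype.ext this
    exact ⟨StrictMono.orderIsoOfSurjective g hmono hsurj⟩
  · rintro ⟨e⟩
    refine ⟨ZFSet.sep (fun p => ∃ a : s, p = ZFSet.pair (vnOrd a) (vnOrd (e a))) (ZFSet.prod sz tz),
      ?_, ?_, ?_⟩
    · intro u hu
      obtain ⟨a, ha, rfl⟩ := (hs u).mp hu
      refine ⟨vnOrd (e ⟨a, ha⟩), (ht _).mpr ⟨_, (e ⟨a, ha⟩).2, rfl⟩, ?_⟩
      rw [pairMemZ_iff, ZFSet.mem_sep]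
      exact ⟨ZFSet.pair_mem_prod.mpr ⟨hu, (ht _).mpr ⟨_, (e ⟨a, ha⟩).2, rfl⟩⟩, ⟨a, ha⟩, rfl⟩
    · intro w hw
      obtain ⟨b, hb, rfl⟩ := (ht w).mp hw
      refine ⟨vnOrd (e.symm ⟨b, hb⟩), (hs _).mpr ⟨_, (e.symm ⟨b, hb⟩).2, rfl⟩, ?_⟩
      rw [pairMemZ_iff, ZFSet.mem_sep]
      have hb' : vnOrd (e (e.symm ⟨b, hb⟩)) = vnOrd b := by rw [e.apply_symm_apply]
      refine ⟨ZFSet.pair_mem_prod.mpr ⟨(hs _).mpr ⟨_, (e.symm ⟨b, hb⟩).2, rfl⟩, hw⟩,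
        e.symm ⟨b, hb⟩, by rw [hb']⟩
    · intro u w u' w' h1 h2
      rw [pairMemZ_iff, ZFSet.mem_sep] at h1 h2
      obtain ⟨-, a, hpa⟩ := h1
      obtain ⟨-, a', hpa'⟩ := h2
      obtain ⟨hu, hw⟩ := ZFSet.pair_inj.mp hpa
      obtain ⟨hu', hw'⟩ := ZFSet.pair_inj.mp hpa'
      subst hu; subst hw; subst hu'; subst hw'
      rw [vn_mem_iff vnOrd hvn, vn_mem_iff vnOrd hvn]
      constructor
      · intro h
        exact_mod_cast e.lt_iff_lt.mpr (by exact_mod_cast h)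
      · intro h
        exact_mod_cast e.lt_iff_lt.mp (by exact_mod_cast h)


lemma posZ_of {sz : ZFSet} {s : Set Ordinal} (hs : Codes vnOrd sz s)
    {a : Ordinal} {γ : Ordinal}
    (hγ : ordT (s ∩ Set.Iio a) = Ordinal.lift.{1} γ)
    (ψ : L.Formula Unit) (hψ : ∀ z : ZFSet, (ψ.Realize fun _ => z) ↔ z = vnOrd γ) :
    PosZ sz (vnOrd a) (fun z => ψ.Realize fun _ => z) := by
  refine ⟨sz ∩ vnOrd a, fun r => ZFSet.mem_inter, vnOrd γ, (hψ _).mpr rfl, ?_⟩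
  rw [isoZ_iff_orderIso vnOrd hvn
    (codes_inter_spec vnOrd hvn hs a _ (fun r => ZFSet.mem_inter))
    (codes_vn_Iio vnOrd hvn γ), nonempty_orderIso_iff]
  rw [hγ, ordT_Iio]

lemma posZ_extract {sz : ZFSet} {s : Set Ordinal} (hs : Codes vnOrd sz s)
    {b : Ordinal} {γ : Ordinal}
    (ψ : L.Formula Unit) (hψ : ∀ z : ZFSet, (ψ.Realize fun _ => z) ↔ z = vnOrd γ)
    (h : PosZ sz (vnOrd b) (fun z => ψ.Realize fun _ => z)) :
    ordT (s ∩ Set.Iio b) = Ordinal.lift.{1} γ := by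
  obtain ⟨w, hw, s', hs', hiso⟩ := h
  rw [hψ] at hs'
  subst hs'
  rw [isoZ_iff_orderIso vnOrd hvn
    (codes_inter_spec vnOrd hvn hs b _ hw)
    (codes_vn_Iio vnOrd hvn γ), nonempty_orderIso_iff, ordT_Iio] at hiso
  exact hiso

end vn
end withmem
end TDExt


open TDExt

/-- if two sets `x, x' ∈ [λ]^{<κ}` realize the same type in `𝔄_{n,k}` (a
structure in a language with membership, constants for the ordinals below `κ`, and
definitions of the measures `E_α` and projections `π_{β,α}` of the extender), then they have
the same order type, and the order isomorphism between them preserves the attached measures,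
the Rudin–Keisler ordering, and the projection maps. -/
theorem type_determines_extender_data
    (L : FirstOrder.Language.{0, 0}) [L.Structure ZFSet]
    (vnOrd : Ordinal → ZFSet)
    (hvn : ∀ α x, x ∈ vnOrd α ↔ ∃ β < α, x = vnOrd β)
    (φmem : L.Formula (Fin 2)) (hφmem : ∀ a b : ZFSet, φmem.Realize ![a, b] ↔ a ∈ b)
    (κc : Cardinal) (κ lam : Ordinal) (hκ : κ = κc.ord) (hκlam : κ < lam)
    -- constants for the ordinals below `κ`:
    (hconsts : ∀ α < κ, ∃ ψ : L.Formula Unit,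
      ∀ z : ZFSet, (ψ.Realize fun _ => z) ↔ z = vnOrd α)
    (E : Ordinal → Set (Set Ordinal))
    (leE : Ordinal → Ordinal → Prop)
    (π : Ordinal → Ordinal → (Ordinal → Ordinal))
    -- parameter-free definability of the measure assignment, of the Rudin–Keisler order, and
    -- of the projections:
    (hdefE : ∀ β, κ ≤ β → β < lam → ∃ φ : L.Formula Unit,
      ∀ β', κ ≤ β' → β' < lam → ((φ.Realize fun _ => vnOrd β') ↔ E β' = E β))
    (hdefle : ∃ φ : L.Formula (Fin 2),
      ∀ α β, (φ.Realize ![vnOrd α, vnOrd β]) ↔ leE α β)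
    (hdefπ : ∀ β α, leE α β → ∃ φ : L.Formula (Fin 2),
      ∀ β' α', leE α' β' → ((φ.Realize ![vnOrd β', vnOrd α']) ↔ π β' α' = π β α))
    (x x' : Set Ordinal) (hx : x ⊆ Set.Ico κ lam) (hx' : x' ⊆ Set.Ico κ lam)
    (hxcard : Cardinal.mk x < Cardinal.lift.{1, 0} κc)
    (hx'card : Cardinal.mk x' < Cardinal.lift.{1, 0} κc)
    (xz x'z : ZFSet)
    (hxz : ∀ y, y ∈ xz ↔ ∃ α ∈ x, y = vnOrd α)
    (hx'z : ∀ y, y ∈ x'z ↔ ∃ α ∈ x', y = vnOrd α)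
    -- `x` and `x'` realize the same type:
    (htp : ∀ φ : L.Formula Unit, (φ.Realize fun _ => xz) ↔ (φ.Realize fun _ => x'z)) :
    ∃ e : x ≃o x',
      (∀ α : x, E α = E (e α)) ∧
      (∀ α β : x, leE α β → leE (e α) (e β)) ∧
      (∀ α β : x, leE α β → π (β : Ordinal) (α : Ordinal) = π (e β : Ordinal) (e α : Ordinal)) := by
  have hCx : Codes vnOrd xz x := hxz
  have hCx' : Codes vnOrd x'z x' := hx'z
  -- Step 1: the two sets have the same order type, hence are order isomorphic
  obtain ⟨γ0, hγ0κ, hγ0⟩ := exists_ordT_lt κc x hxcard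
  obtain ⟨ψ0, hψ0⟩ := hconsts γ0 (hκ ▸ hγ0κ)
  have hA : (thetaA φmem ψ0).Realize (fun _ => xz) := by
    rw [realize_thetaA φmem hφmem]
    refine ⟨vnOrd γ0, (hψ0 _).mpr rfl, ?_⟩
    rw [isoZ_iff_orderIso vnOrd hvn hCx (codes_vn_Iio vnOrd hvn γ0),
      nonempty_orderIso_iff, hγ0, ordT_Iio]
  have hA' := (htp _).mp hA
  rw [realize_thetaA φmem hφmem] at hA'
  obtain ⟨s0, hs0, hiso'⟩ := hA'
  rw [hψ0] at hs0
  subst hs0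
  rw [isoZ_iff_orderIso vnOrd hvn hCx' (codes_vn_Iio vnOrd hvn γ0),
    nonempty_orderIso_iff, ordT_Iio] at hiso'
  -- build the order isomorphism
  have hxx' : ordT x = ordT x' := by rw [hγ0, hiso']
  obtain ⟨e⟩ := (nonempty_orderIso_iff x x').mpr hxx'
  -- a single element's position data
  have hposdata : ∀ α : (x : Set Ordinal), ∃ γ : Ordinal, γ < κ ∧
      ordT (x ∩ Set.Iio ↑α) = Ordinal.lift.{1} γ := by
    intro α
    obtain ⟨γ, hγκ, hγ⟩ := exists_ordT_lt κc (x ∩ Set.Iio ↑α)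
      (lt_of_le_of_lt (Cardinal.mk_le_mk_of_subset Set.inter_subset_left) hxcard)
    exact ⟨γ, hκ ▸ hγκ, hγ⟩
  -- if an element of x' has the same position as α, it is e α
  have hkey : ∀ (α : (x : Set Ordinal)) (b : Ordinal), b ∈ x' →
      ordT (x' ∩ Set.Iio b) = ordT (x ∩ Set.Iio ↑α) → b = ↑(e α) := by
    intro α b hb hpos
    apply pos_inj hb (e α).2
    rw [hpos, pos_map e ↑α α.2]
  -- conclusion 1
  have concl1 : ∀ α : (x : Set Ordinal), E ↑α = E ↑(e α) := by
    intro α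
    obtain ⟨hκα, hαlam⟩ := hx α.2
    obtain ⟨γα, hγκ, hγ⟩ := hposdata α
    obtain ⟨ψγ, hψγ⟩ := hconsts γα hγκ
    obtain ⟨φE, hφE⟩ := hdefE ↑α hκα hαlam
    have hT : (thetaE φmem ψγ φE).Realize fun _ => xz := by
      rw [realize_thetaE φmem hφmem]
      exact ⟨vnOrd ↑α, (hxz _).mpr ⟨↑α, α.2, rfl⟩, (hφE ↑α hκα hαlam).mpr rfl,
        posZ_of vnOrd hvn hCx hγ ψγ hψγ⟩
    have hT' := (htp _).mp hT
    rw [realize_thetaE φmem hφmem] at hT'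
    obtain ⟨z, hz, hχ, hpos⟩ := hT'
    obtain ⟨b, hb, rfl⟩ := (hx'z z).mp hz
    have hbpos := posZ_extract vnOrd hvn hCx' ψγ hψγ hpos
    have hb' : b = ↑(e α) := hkey α b hb (by rw [hbpos, hγ])
    obtain ⟨hκb, hblam⟩ := hx' hb
    rw [← hb']
    exact ((hφE b hκb hblam).mp hχ).symm
  -- conclusions 2 and 3
  have concl23 : ∀ α β : (x : Set Ordinal), leE ↑α ↑β →
      leE ↑(e α) ↑(e β) ∧ π ↑β ↑α = π ↑(e β) ↑(e α) := by
    intro α β hle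
    obtain ⟨hκα, hαlam⟩ := hx α.2
    obtain ⟨hκβ, hβlam⟩ := hx β.2
    obtain ⟨γα, hγκα, hγα⟩ := hposdata α
    obtain ⟨γβ, hγκβ, hγβ⟩ := hposdata β
    obtain ⟨ψα, hψα⟩ := hconsts γα hγκα
    obtain ⟨ψβ, hψβ⟩ := hconsts γβ hγκβ
    obtain ⟨φle, hφle⟩ := hdefle
    obtain ⟨φπ, hφπ⟩ := hdefπ ↑β ↑α hle
    have hT : (theta2 φmem ψα ψβ φle φπ).Realize fun _ => xz := by
      rw [realize_theta2 φmem hφmem]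
      refine ⟨vnOrd ↑α, vnOrd ↑β,
        ⟨(hxz _).mpr ⟨↑α, α.2, rfl⟩, (hxz _).mpr ⟨↑β, β.2, rfl⟩⟩,
        ⟨posZ_of vnOrd hvn hCx hγα ψα hψα, posZ_of vnOrd hvn hCx hγβ ψβ hψβ⟩,
        (hφle ↑α ↑β).mpr hle, (hφπ ↑β ↑α hle).mpr rfl⟩
    have hT' := (htp _).mp hT
    rw [realize_theta2 φmem hφmem] at hT'
    obtain ⟨z1, z2, ⟨hz1, hz2⟩, ⟨hpos1, hpos2⟩, hle', hπ'⟩ := hT'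
    obtain ⟨a', ha', rfl⟩ := (hx'z z1).mp hz1
    obtain ⟨b', hb', rfl⟩ := (hx'z z2).mp hz2
    have ha'e : a' = ↑(e α) :=
      hkey α a' ha' (by rw [posZ_extract vnOrd hvn hCx' ψα hψα hpos1, hγα])
    have hb'e : b' = ↑(e β) :=
      hkey β b' hb' (by rw [posZ_extract vnOrd hvn hCx' ψβ hψβ hpos2, hγβ])
    have hlee : leE a' b' := (hφle a' b').mp hle'
    have hπe : π b' a' = π ↑β ↑α := (hφπ b' a' hlee).mp hπ'
    subst ha'e
    subst hb'e
    exact ⟨hlee, hπe.symm⟩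
  exact ⟨e, concl1, fun α β h => (concl23 α β h).1, fun α β h => (concl23 α β h).2⟩
end

section
/- Suppose ℙ is a Prikry-type forcing such that for every condition p the direct extension order of ℙ/p is κ_{ℓᵖ}-closed where κ_{ℓᵖ} can be made arbitrarily large below κ_ω by extending p, together with the strong Prikry property (Lemma: for every dense open D and p there exist k and p* ≥* p with p* ⌢ ν⃗ ∈ D for all ν⃗ from the measure-one sets). Then ℙ preserves κ_ω⁺, where κ_ω is a singular cardinal of cofinality ω. -/
lemma prikry_mk_toType (o : Ordinal) : Cardinal.mk o.ToType = o.card := by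
  simpa using congrArg Ordinal.card (Ordinal.type_toType o)

/-- Auxiliary transfinite recursion: given a `≤*`-preorder with enough closure and a
step function that direct-extends, there is a condition above `p₀` that sits above a
step-image at every index `i < ρ`. -/
lemma prikry_exists_chain_top {P : Type} (les : P → P → Prop)
    (hsrefl : ∀ p, les p p) (hstrans : ∀ p q r, les p q → les q r → les p r)
    (ρ : Ordinal) (p₀ : P) (step : P → Ordinal → P)
    (hstep : ∀ q i, les q (step q i))
    (hclosed : ∀ i, i ≤ ρ → ∀ c : Ordinal → P,
      (∀ a b, a ≤ b → b < i → les (c a) (c b)) → ∃ q, ∀ j, j < i → les (c j) q) :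
    ∃ q, les p₀ q ∧ ∀ i, i < ρ → ∃ u, les (step u i) q := by
  classical
  let F : ∀ i : Ordinal, (∀ j, j < i → P) → P := fun i prev =>
    step (if h : ∃ q, les p₀ q ∧ ∀ j, ∀ hj : j < i, les (prev j hj) q then h.choose else p₀) i
  let d : Ordinal → P := Ordinal.lt_wf.fix F
  have hd : ∀ i, d i = F i (fun j _ => d j) := fun i => Ordinal.lt_wf.fix_eq F i
  have hdi : ∀ i, (h : ∃ q, les p₀ q ∧ ∀ j, j < i → les (d j) q) → d i = step h.choose i := by
    intro i h
    rw [hd i]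
    show step _ i = _
    congr 1
    exact dif_pos h
  have key : ∀ i, i ≤ ρ → les p₀ (d i) ∧ ∀ j, j < i → les (d j) (d i) := by
    intro i
    induction i using Ordinal.induction with
    | h i IH =>
      intro hiρ
      have hE : ∃ q, les p₀ q ∧ ∀ j, j < i → les (d j) q := by
        rcases eq_or_ne i 0 with rfl | h0
        · exact ⟨p₀, hsrefl p₀, fun j hj => absurd hj not_lt_zero⟩
        · have h0i : 0 < i := pos_iff_ne_zero.2 h0
          obtain ⟨q, hq⟩ := hclosed i hiρ d (by
            intro a b hab hb
            rcases eq_or_lt_of_le hab with rfl | hab'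
            · exact hsrefl _
            · exact (IH b hb (hb.le.trans hiρ)).2 a hab')
          refine ⟨q, ?_, hq⟩
          exact hstrans _ _ _ ((IH 0 h0i ((zero_le (a := i)).trans hiρ)).1) (hq 0 h0i)
      have hdieq := hdi i hE
      obtain ⟨hq1, hq2⟩ := hE.choose_spec
      constructor
      · rw [hdieq]; exact hstrans _ _ _ hq1 (hstep _ _)
      · intro j hj
        rw [hdieq]
        exact hstrans _ _ _ (hq2 j hj) (hstep _ _)
  obtain ⟨h1, h2⟩ := key ρ le_rfl
  refine ⟨d ρ, h1, fun i hiρ => ?_⟩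
  have hEi : ∃ q, les p₀ q ∧ ∀ j, j < i → les (d j) q :=
    ⟨d i, (key i hiρ.le).1, fun j hj => (key i hiρ.le).2 j hj⟩
  exact ⟨hEi.choose, (hdi i hEi) ▸ h2 i hiρ⟩

/-- a Prikry-type forcing `(P, le, les)` whose direct extension orders are
increasingly closed and which satisfies the strong Prikry property preserves `κ_ω⁺`:
every name `R` for a function from `ρ < κ_ω` to `κ_ω⁺` is forced bounded below `κ_ω⁺`. -/
theorem prikry_preserves_successor
    (P : Type) (le les : P → P → Prop)
    (hrefl : ∀ p, le p p) (htrans : ∀ p q r, le p q → le q r → le p r)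
    (hsrefl : ∀ p, les p p) (hstrans : ∀ p q r, les p q → les q r → les p r)
    (hsub : ∀ p q, les p q → le p q)
    (κ : ℕ → Cardinal) (hreg : ∀ n, (κ n).IsRegular) (hmono : StrictMono κ)
    (ℓ : P → ℕ)
    -- the direct extension order above `p` is `κ_{ℓ p}`-closed:
    (hclosed : ∀ p : P, ∀ ρ : Ordinal, ρ < (κ (ℓ p)).ord →
      ∀ c : Ordinal → P, (∀ i j, i ≤ j → j < ρ → les (c i) (c j)) →
        ∃ q : P, ∀ i < ρ, les (c i) q)
    -- `κ_{ℓ p}` can be made arbitrarily large below `κ_ω` by extending `p`: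
    (hlarge : ∀ p : P, ∀ n : ℕ, ∃ q : P, le p q ∧ n ≤ ℓ q)
    -- strong Prikry property: for dense open `D` there is a direct extension `q` such that the
    -- (fewer than `κ_ω` many) extensions of `q` by tuples from the measure-one sets all lie in
    -- `D`, and they are predense above `q`:
    (hSP : ∀ D : Set P, (∀ p q, p ∈ D → le p q → q ∈ D) → (∀ p, ∃ q, le p q ∧ q ∈ D) →
      ∀ p : P, ∃ q : P, les p q ∧ ∃ T : Set P, T ⊆ D ∧ (∀ t ∈ T, le q t) ∧
        Cardinal.mk T < (⨆ n, κ n) ∧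
        ∀ r, le q r → ∃ t ∈ T, ∃ s, le t s ∧ le r s)
    -- `R` is a name for a function from `ρ` to `κ_ω⁺`:
    (ρ : Ordinal) (hρ : ρ < (⨆ n, κ n).ord)
    (R : Ordinal → P → Ordinal → Prop)
    (hmonoR : ∀ i p q β, R i p β → le p q → R i q β)
    (hval : ∀ i p β β', R i p β → R i p β' → β = β')
    (hbound : ∀ i p β, R i p β → β < (Order.succ (⨆ n, κ n)).ord)
    (hdense : ∀ i < ρ, ∀ p, ∃ q, le p q ∧ ∃ β, R i q β)
    (p : P) :
    ∃ q, le p q ∧ ∃ b < (Order.succ (⨆ n, κ n)).ord,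
      ∀ i < ρ, ∀ r, le q r → ∀ β, R i r β → β < b := by
  classical
  -- find `n` with `ρ < (κ n).ord`
  have hρcard : ρ.card < ⨆ n, κ n := Cardinal.lt_ord.1 hρ
  obtain ⟨n, hn⟩ : ∃ n, ρ.card < κ n := by
    by_contra h
    push_neg at h
    exact absurd (ciSup_le h) (not_le.2 hρcard)
  obtain ⟨p₀, hpp₀, hn₀⟩ := hlarge p n
  have hρ₀ : ρ < (κ (ℓ p₀)).ord :=
    Cardinal.lt_ord.2 (hn.trans_le (hmono.monotone hn₀))
  -- the dense open sets
  set D : Ordinal → Set P := fun i => {r | ∃ β, R i r β} with hDdef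
  have hDopen : ∀ i, ∀ a b, a ∈ D i → le a b → b ∈ D i := by
    rintro i a b ⟨β, hβ⟩ hab
    exact ⟨β, hmonoR i a b β hβ hab⟩
  -- step function via the strong Prikry property
  let step : P → Ordinal → P := fun q i =>
    if h : i < ρ then (hSP (D i) (hDopen i) (hdense i h) q).choose else q
  have hstepdef : ∀ q i (h : i < ρ),
      step q i = (hSP (D i) (hDopen i) (hdense i h) q).choose := by
    intro q i h
    exact dif_pos h
  have hstep : ∀ q i, les q (step q i) := by
    intro q i
    by_cases h : i < ρ
    · rw [hstepdef q i h]
      exact (hSP (D i) (hDopen i) (hdense i h) q).choose_spec.1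
    · have : step q i = q := dif_neg h
      rw [this]
      exact hsrefl q
  have hstepSpec : ∀ q i, i < ρ → ∃ T : Set P, T ⊆ D i ∧ (∀ t ∈ T, le (step q i) t) ∧
      Cardinal.mk T < (⨆ n, κ n) ∧ ∀ r, le (step q i) r → ∃ t ∈ T, ∃ s, le t s ∧ le r s := by
    intro q i h
    rw [hstepdef q i h]
    exact (hSP (D i) (hDopen i) (hdense i h) q).choose_spec.2
  -- build the `≤*`-increasing chain and its top
  obtain ⟨q, hq0, hq⟩ := prikry_exists_chain_top les hsrefl hstrans ρ p₀ step hstep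
    (fun i hi c hc => hclosed p₀ i (lt_of_le_of_lt hi hρ₀) c hc)
  refine ⟨q, htrans _ _ _ hpp₀ (hsub _ _ hq0), ?_⟩
  -- the measure-one extension sets above `q`
  have key : ∀ i, i < ρ → ∃ T : Set P, T ⊆ D i ∧ Cardinal.mk T < (⨆ n, κ n) ∧
      ∀ r, le q r → ∃ t ∈ T, ∃ s, le t s ∧ le r s := by
    intro i hi
    obtain ⟨u, hu⟩ := hq i hi
    obtain ⟨T, hT1, _, hT3, hT4⟩ := hstepSpec u i hi
    exact ⟨T, hT1, hT3, fun r hr => hT4 r (htrans _ _ _ (hsub _ _ hu) hr)⟩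
  choose T hTD hTcard hTpre using key
  -- index type for all possible values
  let e : ρ.ToType → Set.Iio ρ := (Ordinal.ToType.mk (o := ρ)).symm
  let ι : Type := Σ x : ρ.ToType, (T (e x).1 (e x).2 : Set P)
  have hmem : ∀ x : ι, ∃ β, R (e x.1).1 (x.2 : P) β := fun x => hTD (e x.1).1 (e x.1).2 x.2.2
  let f : ι → Ordinal := fun x => (hmem x).choose
  have hf : ∀ x : ι, R (e x.1).1 (x.2 : P) (f x) := fun x => (hmem x).choose_spec
  -- cardinality bounds
  have hκω : Cardinal.aleph0 ≤ ⨆ n, κ n :=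
    (hreg 0).aleph0_le.trans (le_ciSup (Cardinal.bddAbove_range _) 0)
  have hregs : (Order.succ (⨆ n, κ n)).IsRegular := Cardinal.isRegular_succ hκω
  have hιcard : Cardinal.mk ι < Order.succ (⨆ n, κ n) := by
    rw [show Cardinal.mk ι = Cardinal.sum fun x : ρ.ToType => Cardinal.mk (T (e x).1 (e x).2) from
      Cardinal.mk_sigma _]
    apply Cardinal.sum_lt_of_isRegular hregs
    · rw [prikry_mk_toType]
      exact hρcard.trans_le (Order.le_succ _)
    · intro x
      exact (hTcard (e x).1 (e x).2).trans_le (Order.le_succ _)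
  have hΛlim : Order.IsSuccLimit (Order.succ (⨆ n, κ n)).ord :=
    Cardinal.isSuccLimit_ord (hκω.trans (Order.le_succ _))
  have hsup : (⨆ x, f x) < (Order.succ (⨆ n, κ n)).ord := by
    apply Ordinal.iSup_lt_ord
    · rw [hregs.cof_eq]
      exact hιcard
    · intro x
      exact hbound _ _ _ (hf x)
  refine ⟨Order.succ (⨆ x, f x), hΛlim.succ_lt hsup, ?_⟩
  intro i hi r hr β hβ
  obtain ⟨t, ht, s, hts, hrs⟩ := hTpre i hi r hr
  have hRs : R i s β := hmonoR i r s β hβ hrs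
  set y : ρ.ToType := (Ordinal.ToType.mk (o := ρ)) ⟨i, hi⟩ with hy
  have hex0 : e y = ⟨i, hi⟩ := (Ordinal.ToType.mk (o := ρ)).symm_apply_apply ⟨i, hi⟩
  have hTeq : (T (e y).1 (e y).2 : Set P) = T i hi := by rw [hex0]
  let x : ι := ⟨y, ⟨t, hTeq.symm ▸ ht⟩⟩
  have h1 : (e (x.1)).1 = i := by
    show (e y).1 = i
    rw [hex0]
  have hRtf : R (e x.1).1 t (f x) := hf x
  rw [h1] at hRtf
  have hRsf : R i s (f x) := hmonoR i t s (f x) hRtf hts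
  have hβeq : β = f x := hval i s β (f x) hRs hRsf
  rw [hβeq]
  exact lt_of_le_of_lt (le_ciSup (Ordinal.bddAbove_range f) x) (Order.lt_succ _)
end
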